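/- Ground space of the zero-coupling gauge theory: let 𝒦 be a set of flux patterns k : J → ZMod 2, each satisfying δk = 0, and assume the exactness condition that every x : J → ZMod 2 with Σ_{j∈J} k(j)·x(j) = 0 for all k ∈ 𝒦 is of the form x = ∂m for some m : I → ZMod 2. Then the joint +1 eigenspace {v ∈ H_m ⊗ H_g : C_i v = v for all i ∈ I, and (1 ⊗ Z_g(k)) v = v for all k ∈ 𝒦} equals the range of the gauging map, {G ψ : ψ ∈ H_m}. -/

import Mathlib

set_option linter.unusedSectionVars false

noncomputable section

namespace GaugingFractal

/-- The sign `(-1)^t` attached to a `ZMod 2` exponent. -/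
def sgn (t : ZMod 2) : ℂ := (-1 : ℂ) ^ t.val

lemma sgn_mul_self (t : ZMod 2) : sgn t * sgn t = 1 := by
  unfold sgn
  rw [← pow_add, ← two_mul, pow_mul]
  norm_num

lemma zmodfun_add_self {K : Type*} (k : K → ZMod 2) : k + k = 0 := by
  funext j
  exact CharTwo.add_self_eq_zero _

/-- Hilbert space of qubits labelled by a finite set `K`; the computational basis
vector `e_a` is indexed by a pattern `a : K → ZMod 2`. -/
abbrev HS (K : Type*) := EuclideanSpace ℂ (K → ZMod 2)

section Single
variable {K : Type*} [Fintype K] [DecidableEq K]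

/-- Pauli X operator: `X(p) e_a = e_{a+p}`. -/
def XOp (p : K → ZMod 2) : HS K →ₗ[ℂ] HS K where
  toFun ψ := WithLp.toLp 2 (fun a => ψ (a + p))
  map_add' _ _ := rfl
  map_smul' _ _ := rfl

/-- Pauli Z operator: `Z(p) e_a = (-1)^{Σ_i p i * a i} e_a`. -/
def ZOp (p : K → ZMod 2) : HS K →ₗ[ℂ] HS K where
  toFun ψ := WithLp.toLp 2 (fun a => sgn (∑ i, p i * a i) * ψ a)
  map_add' ψ φ := by
    ext a
    exact mul_add _ _ _
  map_smul' c ψ := by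
    ext a
    simp only [RingHom.id_apply, PiLp.smul_apply, PiLp.toLp_apply, smul_eq_mul]
    ring

end Single

section Pair

variable {I J : Type*} [Fintype I] [DecidableEq I] [Fintype J] [DecidableEq J]

/-- Hilbert space of the matter qubits (labelled by `I`) tensored with the gauge
qubits (labelled by `J`): the computational basis vector indexed by `(a, b)`
realizes the tensor product `e_a ⊗ f_b`. -/
abbrev HS2 (I J : Type*) := EuclideanSpace ℂ ((I → ZMod 2) × (J → ZMod 2))

/-- `X(p) ⊗ X_g(q)` on `H_m ⊗ H_g`. -/
def XXOp (p : I → ZMod 2) (q : J → ZMod 2) : HS2 I J →ₗ[ℂ] HS2 I J where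
  toFun ψ := WithLp.toLp 2 (fun ab => ψ (ab.1 + p, ab.2 + q))
  map_add' _ _ := rfl
  map_smul' _ _ := rfl

/-- `X(p) ⊗ Z_g(q)` on `H_m ⊗ H_g`. -/
def XZOp (p : I → ZMod 2) (q : J → ZMod 2) : HS2 I J →ₗ[ℂ] HS2 I J where
  toFun ψ := WithLp.toLp 2 (fun ab => sgn (∑ j, q j * ab.2 j) * ψ (ab.1 + p, ab.2))
  map_add' ψ φ := by
    ext ab
    exact mul_add _ _ _
  map_smul' c ψ := by
    ext ab
    simp only [RingHom.id_apply, PiLp.smul_apply, PiLp.toLp_apply, smul_eq_mul]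
    ring

/-- `Z(p) ⊗ X_g(q)` on `H_m ⊗ H_g`. -/
def ZXOp (p : I → ZMod 2) (q : J → ZMod 2) : HS2 I J →ₗ[ℂ] HS2 I J where
  toFun ψ := WithLp.toLp 2 (fun ab => sgn (∑ i, p i * ab.1 i) * ψ (ab.1, ab.2 + q))
  map_add' ψ φ := by
    ext ab
    exact mul_add _ _ _
  map_smul' c ψ := by
    ext ab
    simp only [RingHom.id_apply, PiLp.smul_apply, PiLp.toLp_apply, smul_eq_mul]
    ring

/-- The flux operator `1 ⊗ Z_g(k)` on `H_m ⊗ H_g`. -/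
def IZOp (k : J → ZMod 2) : HS2 I J →ₗ[ℂ] HS2 I J := XZOp 0 k

variable (A : J → Finset I)

/-- The boundary map `∂ : (I → ZMod 2) → (J → ZMod 2)`, `(∂p)(j) = Σ_{i ∈ A j} p(i)`. -/
def bnd (p : I → ZMod 2) : J → ZMod 2 := fun j => ∑ i ∈ A j, p i

/-- The coboundary map `δ : (J → ZMod 2) → (I → ZMod 2)`, `(δk)(i) = Σ_{j : i ∈ A j} k(j)`. -/
def cobnd (k : J → ZMod 2) : I → ZMod 2 :=
  fun i => ∑ j ∈ Finset.univ.filter (fun j => i ∈ A j), k j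

/-- The indicator pattern `χ_i` of a matter qubit `i`. -/
def chi (i : I) : I → ZMod 2 := Pi.single i 1

/-- The indicator pattern `κ_j` of a gauge qubit `j`. -/
def kap (j : J) : J → ZMod 2 := Pi.single j 1

/-- The local gauge constraint `C_i = X(χ_i) ⊗ X_g(∂χ_i)`. -/
def C (i : I) : HS2 I J →ₗ[ℂ] HS2 I J := XXOp (chi i) (bnd A (chi i))

lemma XXOp_mul (p p' : I → ZMod 2) (q q' : J → ZMod 2) :
    (XXOp p q : Module.End ℂ (HS2 I J)) * XXOp p' q' = XXOp (p + p') (q + q') := by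
  apply LinearMap.ext
  intro ψ
  ext ab
  show ψ (ab.1 + p + p', ab.2 + q + q') = ψ (ab.1 + (p + p'), ab.2 + (q + q'))
  rw [add_assoc, add_assoc]

lemma C_commute (i i' : I) : Commute (C A i) (C A i') := by
  show C A i * C A i' = C A i' * C A i
  unfold C
  rw [XXOp_mul, XXOp_mul, add_comm (chi i) (chi i'),
    add_comm (bnd A (chi i)) (bnd A (chi i'))]

/-- The product of gauge constraints `C^s = Π_{i : s i = 1} C_i`. -/
def Cprod (s : I → ZMod 2) : Module.End ℂ (HS2 I J) :=
  (Finset.univ.filter fun i => s i = 1).noncommProd (fun i => C A i)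
    (fun i _ j _ _ => C_commute A i j)

lemma Chalf_commute (i i' : I) :
    Commute ((2 : ℂ)⁻¹ • (1 + C A i)) ((2 : ℂ)⁻¹ • (1 + C A i')) := by
  have h : Commute (1 + C A i) (1 + C A i') :=
    (Commute.one_left _).add_left ((Commute.one_right _).add_right (C_commute A i i'))
  exact (h.smul_left _).smul_right _

/-- The projector `P = Π_{i ∈ I} (1 + C_i)/2` onto the gauge invariant subspace. -/
def Pproj : Module.End ℂ (HS2 I J) :=
  Finset.univ.noncommProd (fun i => (2 : ℂ)⁻¹ • (1 + C A i))
    (fun i _ j _ _ => Chalf_commute A i j)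

/-- `ψ ↦ ψ ⊗ f_0`, the inclusion `1_m ⊗ |f_0⟩ : H_m → H_m ⊗ H_g` determined by the
all-zeros gauge basis vector `f_0`. -/
def incl : HS I →ₗ[ℂ] HS2 I J where
  toFun ψ := WithLp.toLp 2 (fun ab => if ab.2 = 0 then ψ ab.1 else 0)
  map_add' ψ φ := by
    ext ab
    by_cases h : ab.2 = 0 <;> simp [h]
  map_smul' c ψ := by
    ext ab
    by_cases h : ab.2 = 0 <;> simp [h]

/-- The compression `1_m ⊗ ⟨f_0| : H_m ⊗ H_g → H_m`. -/
def res0 : HS2 I J →ₗ[ℂ] HS I where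
  toFun ψ := WithLp.toLp 2 (fun a => ψ (a, 0))
  map_add' _ _ := rfl
  map_smul' _ _ := rfl

/-- The state gauging map `G ψ = P (ψ ⊗ f_0)`. -/
def Gmap : HS I →ₗ[ℂ] HS2 I J := Pproj A ∘ₗ incl

/-- The operator gauging map `𝒢[O] = Σ_{s : I → ZMod 2} C^s (O ⊗ |f_0⟩⟨f_0|) C^s`,
where `O ⊗ |f_0⟩⟨f_0| = incl ∘ O ∘ res0`. -/
def gaugeOp (O : Module.End ℂ (HS I)) : Module.End ℂ (HS2 I J) :=
  ∑ s : I → ZMod 2, Cprod A s * (incl ∘ₗ O ∘ₗ res0) * Cprod A s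

/-- The joint fixed subspace `{v | C_i v = v for all i}` of the gauge constraints. -/
def fixedSub : Submodule ℂ (HS2 I J) where
  carrier := {v | ∀ i, C A i v = v}
  add_mem' := by
    intro x y hx hy i
    rw [map_add, hx i, hy i]
  zero_mem' := by
    intro i
    simp
  smul_mem' := by
    intro c x hx i
    rw [map_smul, hx i]

/-- The symmetric subspace `{ψ | X(s) ψ = ψ for all s with ∂s = 0}` of the matter space. -/
def symmSub : Submodule ℂ (HS I) where
  carrier := {ψ | ∀ s, bnd A s = 0 → XOp s ψ = ψ}
  add_mem' := by
    intro x y hx hy s hs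
    rw [map_add, hx s hs, hy s hs]
  zero_mem' := by
    intro s hs
    simp
  smul_mem' := by
    intro c x hx s hs
    rw [map_smul, hx s hs]

/-- The cluster stabilizer `K_i = X(χ_i) ⊗ Z_g(∂χ_i)`. -/
def Kst (i : I) : Module.End ℂ (HS2 I J) := XZOp (chi i) (bnd A (chi i))

/-- The cluster stabilizer `L_j = Z(δκ_j) ⊗ X_g(κ_j)`. -/
def Lst (j : J) : Module.End ℂ (HS2 I J) := ZXOp (cobnd A (kap j)) (kap j)

/-- The disentangling circuit of controlled-X gates from each matter qubit to its
adjacent gauge qubits: `V (e_a ⊗ f_b) = e_a ⊗ f_{b + ∂a}`. -/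
def Vequiv : HS2 I J ≃ₗ[ℂ] HS2 I J where
  toFun ψ := WithLp.toLp 2 (fun ab => ψ (ab.1, ab.2 + bnd A ab.1))
  invFun ψ := WithLp.toLp 2 (fun ab => ψ (ab.1, ab.2 + bnd A ab.1))
  map_add' _ _ := rfl
  map_smul' _ _ := rfl
  left_inv ψ := by
    ext ab
    show ψ (ab.1, ab.2 + bnd A ab.1 + bnd A ab.1) = ψ ab
    rw [add_assoc, zmodfun_add_self, add_zero]
  right_inv ψ := by
    ext ab
    show ψ (ab.1, ab.2 + bnd A ab.1 + bnd A ab.1) = ψ ab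
    rw [add_assoc, zmodfun_add_self, add_zero]

/-- The circuit of controlled-Z gates along the edges of the bipartite graph:
`U (e_a ⊗ f_b) = (-1)^{Σ_j (∂a)(j)·b(j)} e_a ⊗ f_b`. -/
def Uequiv : HS2 I J ≃ₗ[ℂ] HS2 I J where
  toFun ψ := WithLp.toLp 2 (fun ab => sgn (∑ j, bnd A ab.1 j * ab.2 j) * ψ ab)
  invFun ψ := WithLp.toLp 2 (fun ab => sgn (∑ j, bnd A ab.1 j * ab.2 j) * ψ ab)
  map_add' ψ φ := by
    ext ab
    exact mul_add _ _ _
  map_smul' c ψ := by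
    ext ab
    simp only [RingHom.id_apply, PiLp.smul_apply, PiLp.toLp_apply, smul_eq_mul]
    ring
  left_inv ψ := by
    ext ab
    show sgn _ * (sgn _ * ψ ab) = ψ ab
    rw [← mul_assoc, sgn_mul_self, one_mul]
  right_inv ψ := by
    ext ab
    show sgn _ * (sgn _ * ψ ab) = ψ ab
    rw [← mul_assoc, sgn_mul_self, one_mul]


/-! ### Auxiliary lemmas for Statement 10 -/

lemma zmod2_cases (t : ZMod 2) : t = 0 ∨ t = 1 := by revert t; decide

lemma sgn_zero : sgn 0 = 1 := by simp [sgn]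

lemma sgn_one : sgn 1 = -1 := by
  have h : ((1 : ZMod 2)).val = 1 := rfl
  simp [sgn, h]

lemma add_eq_zero_iff' {K : Type*} (x y : K → ZMod 2) : x + y = 0 ↔ x = y := by
  constructor
  · intro h
    have h2 : x + y + y = y := by rw [h, zero_add]
    rwa [add_assoc, zmodfun_add_self, add_zero] at h2
  · rintro rfl; exact zmodfun_add_self x

lemma bnd_add (p q : I → ZMod 2) : bnd A (p + q) = bnd A p + bnd A q := by
  funext j
  simp [bnd, Finset.sum_add_distrib]

lemma bnd_zero : bnd A (0 : I → ZMod 2) = 0 := by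
  funext j; simp [bnd]

lemma XXOp_zero : (XXOp (0 : I → ZMod 2) (0 : J → ZMod 2)) = (1 : Module.End ℂ (HS2 I J)) := by
  apply LinearMap.ext; intro v; ext ab
  show v (ab.1 + 0, ab.2 + 0) = v ab
  rw [add_zero, add_zero]

/-- Indicator pattern of a finite set. -/
def indF (S : Finset I) : I → ZMod 2 := fun i => if i ∈ S then 1 else 0

lemma indF_empty : indF (∅ : Finset I) = 0 := by funext i; simp [indF]

lemma indF_insert (i : I) (S : Finset I) (hi : i ∉ S) :
    indF (insert i S) = chi i + indF S := by
  funext x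
  by_cases hx : x = i
  · subst hx; simp [indF, chi, hi]
  · simp [indF, chi, hx, Pi.single_apply]

lemma indF_filter (s : I → ZMod 2) :
    indF (Finset.univ.filter fun i => s i = 1) = s := by
  funext i
  rcases zmod2_cases (s i) with h | h <;> simp [indF, h]

lemma filter_indF (S : Finset I) :
    (Finset.univ.filter fun i => indF S i = 1) = S := by
  ext i
  by_cases h : i ∈ S <;> simp [indF, h]

lemma indF_bijective : Function.Bijective (indF (I := I)) := by
  rw [Function.bijective_iff_has_inverse]
  exact ⟨fun s => Finset.univ.filter fun i => s i = 1, filter_indF, indF_filter⟩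

lemma noncommProd_C (T : Finset I) :
    T.noncommProd (fun i => C A i) (fun i _ j _ _ => C_commute A i j)
      = XXOp (indF T) (bnd A (indF T)) := by
  induction T using Finset.cons_induction with
  | empty => erw [Finset.noncommProd_empty, indF_empty, bnd_zero, XXOp_zero]
  | cons i T hi ih =>
    erw [Finset.noncommProd_cons, ih, Finset.cons_eq_insert, indF_insert i T hi, bnd_add]
    exact XXOp_mul (chi i) (indF T) (bnd A (chi i)) (bnd A (indF T))

lemma Phalf_expand (T : Finset I) :
    T.noncommProd (fun i => (2:ℂ)⁻¹ • (1 + C A i)) (fun i _ j _ _ => Chalf_commute A i j)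
      = ((2:ℂ)⁻¹) ^ T.card •
        ∑ S ∈ T.powerset, XXOp (indF S) (bnd A (indF S)) := by
  induction T using Finset.cons_induction with
  | empty =>
    erw [Finset.noncommProd_empty, Finset.powerset_empty, Finset.sum_singleton,
      indF_empty, bnd_zero, XXOp_zero, Finset.card_empty, pow_zero, one_smul]
  | cons i T hi ih =>
    erw [Finset.noncommProd_cons, ih, Finset.cons_eq_insert, Finset.powerset_insert]
    have hdis : Disjoint T.powerset (T.powerset.image (insert i)) := by
      rw [Finset.disjoint_right]
      intro S hS hS'
      rcases Finset.mem_image.mp hS with ⟨S', hS', rfl⟩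
      exact hi (Finset.mem_powerset.mp hS' (Finset.mem_insert_self i S'))
    have hinj : ∀ x ∈ T.powerset, ∀ y ∈ T.powerset, insert i x = insert i y → x = y := by
      intro x hx y hy h
      have hix : i ∉ x := fun h' => hi (Finset.mem_powerset.mp hx h')
      have hiy : i ∉ y := fun h' => hi (Finset.mem_powerset.mp hy h')
      have := congrArg (fun S => Finset.erase S i) h
      simpa [Finset.erase_insert hix, Finset.erase_insert hiy] using this
    have hterm : ∀ S ∈ T.powerset,
        C A i * XXOp (indF S) (bnd A (indF S))
          = XXOp (indF (insert i S)) (bnd A (indF (insert i S))) := by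
      intro S hS
      have hiS : i ∉ S := fun h => hi (Finset.mem_powerset.mp hS h)
      rw [indF_insert i S hiS, bnd_add]
      exact XXOp_mul (chi i) (indF S) (bnd A (chi i)) (bnd A (indF S))
    rw [Finset.sum_union hdis, Finset.sum_image hinj,
      smul_mul_assoc, mul_smul_comm, smul_smul,
      Finset.card_insert_of_notMem hi, add_mul, one_mul, Finset.mul_sum,
      Finset.sum_congr rfl hterm, pow_succ, mul_comm ((2:ℂ)⁻¹ ^ T.card) (2:ℂ)⁻¹]

lemma piLp_sum_apply {α : Type*} (s : Finset α) (f : α → HS2 I J)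
    (ab : (I → ZMod 2) × (J → ZMod 2)) :
    (∑ x ∈ s, f x) ab = ∑ x ∈ s, f x ab := by
  induction s using Finset.cons_induction with
  | empty => rfl
  | cons a s ha ih =>
    rw [Finset.sum_cons, Finset.sum_cons, ← ih]
    rfl

lemma Pproj_apply (v : HS2 I J) (ab : (I → ZMod 2) × (J → ZMod 2)) :
    Pproj A v ab = ((2:ℂ)⁻¹) ^ Fintype.card I *
      ∑ s : I → ZMod 2, v (ab.1 + s, ab.2 + bnd A s) := by
  rw [Pproj, Phalf_expand, Finset.powerset_univ, Finset.card_univ,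
    LinearMap.smul_apply, LinearMap.sum_apply]
  show ((2:ℂ)⁻¹) ^ Fintype.card I *
      (∑ S : Finset I, XXOp (indF S) (bnd A (indF S)) v) ab = _
  rw [piLp_sum_apply]
  congr 1
  exact Fintype.sum_bijective indF indF_bijective _ _ (fun S => rfl)

lemma fixed_shift {v : HS2 I J} (hv : ∀ i, C A i v = v) (s : I → ZMod 2)
    (ab : (I → ZMod 2) × (J → ZMod 2)) :
    v (ab.1 + s, ab.2 + bnd A s) = v ab := by
  have hT : ∀ T : Finset I,
      (T.noncommProd (fun i => C A i) (fun i _ j _ _ => C_commute A i j)) v = v := by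
    intro T
    induction T using Finset.cons_induction with
    | empty => erw [Finset.noncommProd_empty]; rfl
    | cons i T hi ih =>
      erw [Finset.noncommProd_cons, Module.End.mul_apply, ih, hv i]
  have h := hT (Finset.univ.filter fun i => s i = 1)
  rw [noncommProd_C, indF_filter] at h
  calc v (ab.1 + s, ab.2 + bnd A s) = (XXOp s (bnd A s)) v ab := rfl
    _ = v ab := by rw [h]

lemma card_fiber (m : I → ZMod 2) :
    (Finset.univ.filter fun s => bnd A s = bnd A m).card
      = (Finset.univ.filter fun s => bnd A s = 0).card := by
  apply Finset.card_nbij' (i := fun s => s + m) (j := fun s => s + m)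
  · intro s hs
    simp only [Finset.mem_coe, Finset.mem_filter, Finset.mem_univ, true_and] at *
    rw [bnd_add, hs, zmodfun_add_self]
  · intro s hs
    simp only [Finset.mem_coe, Finset.mem_filter, Finset.mem_univ, true_and] at *
    rw [bnd_add, hs, zero_add]
  · intro s _
    dsimp only
    rw [add_assoc, zmodfun_add_self, add_zero]
  · intro s _
    dsimp only
    rw [add_assoc, zmodfun_add_self, add_zero]

lemma pairing (k : J → ZMod 2) (s : I → ZMod 2) :
    ∑ j, k j * bnd A s j = ∑ i, cobnd A k i * s i := by
  unfold bnd cobnd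
  have h1 : ∀ j, k j * ∑ i ∈ A j, s i = ∑ i, if i ∈ A j then k j * s i else 0 := by
    intro j
    rw [Finset.mul_sum, Finset.sum_ite_mem, Finset.univ_inter]
  simp only [h1]
  rw [Finset.sum_comm]
  refine Finset.sum_congr rfl fun i _ => ?_
  rw [Finset.sum_filter, Finset.sum_mul]
  refine Finset.sum_congr rfl fun j _ => ?_
  rw [ite_mul, zero_mul]

/-- Ground space of the zero-coupling gauge theory: given flux patterns
`𝒦`, all flat (`δk = 0`), such that every `x` orthogonal to all of `𝒦` is a boundary
`x = ∂m`, the joint fixed subspace of the gauge constraints and the flux operators equals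
the range of the gauging map `G`. -/
theorem ground_space_eq_range (A : J → Finset I) (K : Set (J → ZMod 2))
    (hflat : ∀ k ∈ K, cobnd A k = 0)
    (hexact : ∀ x : J → ZMod 2,
      (∀ k ∈ K, ∑ j, k j * x j = (0 : ZMod 2)) → ∃ m : I → ZMod 2, x = bnd A m) :
    {v : HS2 I J | (∀ i : I, C A i v = v) ∧ ∀ k ∈ K, IZOp k v = v}
      = Set.range (Gmap A) := by
  ext v
  simp only [Set.mem_setOf_eq, Set.mem_range]
  constructor
  · rintro ⟨hC, hK⟩
    set N := (Finset.univ.filter fun s : I → ZMod 2 => bnd A s = 0).card with hNdef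
    have hN0 : (N : ℂ) ≠ 0 := by
      have hmem : (0 : I → ZMod 2) ∈ Finset.univ.filter fun s => bnd A s = 0 := by
        simp [bnd_zero]
      have hpos : 0 < N := Finset.card_pos.mpr ⟨0, hmem⟩
      exact_mod_cast hpos.ne'
    refine ⟨((2:ℂ) ^ Fintype.card I / N) • res0 v, ?_⟩
    ext ab
    show Pproj A (incl (((2:ℂ) ^ Fintype.card I / N) • res0 v)) ab = v ab
    rw [Pproj_apply]
    have hsum : ∀ s : I → ZMod 2,
        incl (((2:ℂ) ^ Fintype.card I / N) • res0 v) (ab.1 + s, ab.2 + bnd A s)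
          = if ab.2 + bnd A s = 0 then ((2:ℂ) ^ Fintype.card I / N) * v (ab.1 + s, 0)
            else 0 := fun s => rfl
    simp only [hsum]
    rw [← Finset.sum_filter]
    by_cases hb : ∃ m, ab.2 = bnd A m
    · obtain ⟨m, hm⟩ := hb
      have hfil : (Finset.univ.filter fun s => ab.2 + bnd A s = 0)
          = Finset.univ.filter fun s => bnd A s = bnd A m := by
        ext s
        simp only [Finset.mem_filter, Finset.mem_univ, true_and]
        rw [add_eq_zero_iff', ← hm]
        exact ⟨fun h => h.symm, fun h => h.symm⟩
      have hterm : ∀ s ∈ Finset.univ.filter fun s => ab.2 + bnd A s = 0,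
          ((2:ℂ) ^ Fintype.card I / N) * v (ab.1 + s, 0)
            = ((2:ℂ) ^ Fintype.card I / N) * v ab := by
        intro s hs
        have h0 : ab.2 + bnd A s = 0 := (Finset.mem_filter.mp hs).2
        have hv := fixed_shift A hC s ab
        rw [h0] at hv
        rw [hv]
      rw [Finset.sum_congr rfl hterm, Finset.sum_const, hfil, card_fiber, ← hNdef,
        nsmul_eq_mul]
      have h2n : ((2:ℂ)⁻¹) ^ Fintype.card I * (2:ℂ) ^ Fintype.card I = 1 := by
        rw [← mul_pow]
        norm_num
      calc (2:ℂ)⁻¹ ^ Fintype.card I * ((N:ℂ) * ((2:ℂ) ^ Fintype.card I / N * v ab))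
          = ((2:ℂ)⁻¹ ^ Fintype.card I * (2:ℂ) ^ Fintype.card I) * ((N:ℂ) / N) * v ab := by
            ring
        _ = v ab := by rw [h2n, div_self hN0, one_mul, one_mul]
    · have hcontra : ¬ ∀ k ∈ K, ∑ j, k j * ab.2 j = (0 : ZMod 2) :=
        fun h => hb (hexact ab.2 h)
      push_neg at hcontra
      obtain ⟨k, hkK, hk⟩ := hcontra
      have hk1 : ∑ j, k j * ab.2 j = 1 := (zmod2_cases _).resolve_left hk
      have hvz : v ab = 0 := by
        have heq : sgn (∑ j, k j * ab.2 j) * v (ab.1 + 0, ab.2) = v ab :=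
          congrFun (congrArg WithLp.ofLp (hK k hkK)) ab
        rw [hk1, sgn_one, add_zero] at heq
        have hv' : v (ab.1, ab.2) = v ab := rfl
        rw [hv'] at heq
        have h2 : (2 : ℂ) * v ab = 0 := by linear_combination -heq
        exact (mul_eq_zero.mp h2).resolve_left two_ne_zero
      have hemp : (Finset.univ.filter fun s => ab.2 + bnd A s = 0) = ∅ := by
        rw [Finset.filter_eq_empty_iff]
        intro s _ h
        exact hb ⟨s, (add_eq_zero_iff' _ _).mp h⟩
      rw [hemp, Finset.sum_empty, mul_zero, hvz]
  · rintro ⟨ψ, rfl⟩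
    constructor
    · intro i
      ext ab
      show Pproj A (incl ψ) (ab.1 + chi i, ab.2 + bnd A (chi i))
        = Pproj A (incl ψ) ab
      rw [Pproj_apply, Pproj_apply]
      congr 1
      refine Fintype.sum_equiv (Equiv.addLeft (chi i)) _ _ fun s => ?_
      show incl ψ (ab.1 + chi i + s, ab.2 + bnd A (chi i) + bnd A s)
        = incl ψ (ab.1 + (chi i + s), ab.2 + bnd A (chi i + s))
      rw [bnd_add, add_assoc, add_assoc]
    · intro k hkK
      ext ab
      show sgn (∑ j, k j * ab.2 j) * Pproj A (incl ψ) (ab.1 + 0, ab.2)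
        = Pproj A (incl ψ) ab
      rw [add_zero, Prod.mk.eta]
      rcases zmod2_cases (∑ j, k j * ab.2 j) with h0 | h1
      · rw [h0, sgn_zero, one_mul]
      · have hz : Pproj A (incl ψ) ab = 0 := by
          rw [Pproj_apply]
          have hterm : ∀ s : I → ZMod 2,
              incl ψ (ab.1 + s, ab.2 + bnd A s) = 0 := by
            intro s
            show (if ab.2 + bnd A s = 0 then ψ (ab.1 + s) else 0) = 0
            by_cases h : ab.2 + bnd A s = 0
            · exfalso
              have hbs : ab.2 = bnd A s := (add_eq_zero_iff' _ _).mp h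
              have hzero : ∑ j, k j * ab.2 j = 0 := by
                rw [hbs, pairing, hflat k hkK]
                simp
              rw [hzero] at h1
              exact absurd h1 (by decide)
            · simp [h]
          rw [Finset.sum_congr rfl (fun s _ => hterm s), Finset.sum_const_zero, mul_zero]
        rw [hz, mul_zero]

end Pair

end GaugingFractal
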